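/- Let (λ_l)_{l≥1} be scalars in a field of characteristic zero satisfying, for all l ≥ 2: λ_l = (1/(l−1))·∑_{i=1}^{l−1} C(l,i)·λ_i·λ_{l−i}. Then λ_l = l!·λ_1^l for all l ≥ 1. -/

import Mathlib

theorem stmt_10 (K : Type*) [Field K] [CharZero K] (lam : ℕ → K)
    (hrec : ∀ l : ℕ, 2 ≤ l →
      lam l = (1 / ((l : K) - 1)) *
        ∑ i ∈ Finset.Ico 1 l, (l.choose i : K) * lam i * lam (l - i)) :
    ∀ l : ℕ, 1 ≤ l → lam l = (l.factorial : K) * lam 1 ^ l := by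
  intro l
  induction l using Nat.strong_induction_on with
  | _ l ih =>
    intro hl
    rcases eq_or_lt_of_le hl with h1 | h2
    · simp [← h1]
    · have h2' : 2 ≤ l := h2
      rw [hrec l h2']
      have hsum : ∑ i ∈ Finset.Ico 1 l, (l.choose i : K) * lam i * lam (l - i)
          = ((l : K) - 1) * ((l.factorial : K) * lam 1 ^ l) := by
        have hterm : ∀ i ∈ Finset.Ico 1 l,
            (l.choose i : K) * lam i * lam (l - i) = (l.factorial : K) * lam 1 ^ l := by
          intro i hi
          simp only [Finset.mem_Ico] at hi
          rw [ih i hi.2 hi.1, ih (l - i) (by omega) (by omega)]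
          have hc := Nat.choose_mul_factorial_mul_factorial (le_of_lt hi.2)
          have hc' : ((l.choose i : ℕ) : K) * (i.factorial : K) * ((l - i).factorial : K)
              = (l.factorial : K) := by exact_mod_cast congrArg (Nat.cast : ℕ → K) hc
          have hp : lam 1 ^ i * lam 1 ^ (l - i) = lam 1 ^ l := by
            rw [← pow_add]; congr 1; omega
          calc (l.choose i : K) * ((i.factorial : K) * lam 1 ^ i) *
                ((l - i).factorial * lam 1 ^ (l - i))
              = ((l.choose i : K) * i.factorial * (l - i).factorial) *
                (lam 1 ^ i * lam 1 ^ (l - i)) := by ring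
            _ = (l.factorial : K) * lam 1 ^ l := by rw [hc', hp]
        rw [Finset.sum_congr rfl hterm, Finset.sum_const, Nat.card_Ico, nsmul_eq_mul]
        push_cast [Nat.cast_sub (le_of_lt h2')]
        ring
      rw [hsum]
      have hne : ((l : K) - 1) ≠ 0 := by
        have : (l : K) ≠ 1 := by exact_mod_cast (by omega : l ≠ 1)
        exact sub_ne_zero.mpr this
      field_simp
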